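/- Let n≥3 be odd and u ∈ F_{3^n}\F_3 with χ(u+1)≠χ(u-1). With g₁(z)=-(u+1)z, g₂(z)=z(z-1-u), g₄(z)=z²-z+u², we have ∑_{z∈F_{3^n}} χ(g₂(z)g₄(z)) + ∑_{z∈F_{3^n}} χ(g₁(z)g₂(z)g₄(z)) = -2. -/

import Mathlib

theorem stmt_11 (n : ℕ) (hn : 3 ≤ n) (hodd : Odd n)
    (F : Type*) [Field F] [Fintype F] [DecidableEq F]
    (hcard : Fintype.card F = 3 ^ n)
    (u : F) (hu : u ^ 3 ≠ u)
    (huu : quadraticChar F (u + 1) ≠ quadraticChar F (u - 1)) :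
    (∑ z : F, quadraticChar F ((z * (z - 1 - u)) * (z ^ 2 - z + u ^ 2))) +
      (∑ z : F, quadraticChar F
        ((-(u + 1) * z) * (z * (z - 1 - u)) * (z ^ 2 - z + u ^ 2))) = -2 := by
  classical
  -- characteristic is 3
  have hchar : ringChar F = 3 := by
    obtain ⟨m, hp, hm⟩ := FiniteField.card F (ringChar F)
    rw [hcard] at hm
    have hdvd : ringChar F ∣ 3 ^ n := hm ▸ dvd_pow_self (ringChar F) (by positivity)
    have := hp.dvd_of_dvd_pow hdvd
    exact (Nat.prime_dvd_prime_iff_eq hp (by norm_num)).mp this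
  have h3 : (3 : F) = 0 := by
    have := CharP.cast_eq_zero F (ringChar F)
    rw [hchar] at this
    exact_mod_cast this
  have hF2 : ringChar F ≠ 2 := by rw [hchar]; norm_num
  -- χ(-1) = -1
  have hneg1 : quadraticChar F (-1) = -1 := by
    rw [quadraticChar_neg_one hF2, hcard]
    refine ZMod.χ₄_nat_three_mod_four ?_
    obtain ⟨k, hk⟩ := hodd
    subst hk
    rw [pow_add, pow_mul, pow_one, Nat.mul_mod, Nat.pow_mod]
    norm_num
  -- basic nonvanishing
  have hu0 : u ≠ 0 := by intro h; apply hu; rw [h]; ring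
  have hu1 : u ≠ 1 := by intro h; apply hu; rw [h]; ring
  have hum1 : u ≠ -1 := by intro h; apply hu; rw [h]; ring
  have h1u : (1 : F) - u ≠ 0 := sub_ne_zero.mpr fun h => hu1 h.symm
  have h1pu : (1 : F) + u ≠ 0 := fun h => hum1 (by linear_combination h)
  have hu1pu : u + 1 ≠ 0 := fun h => hum1 (by linear_combination h)
  have hum1' : u - 1 ≠ 0 := sub_ne_zero.mpr hu1
  -- χ(1-u) * χ(1+u) = 1
  have key : quadraticChar F (u + 1) * quadraticChar F (u - 1) = -1 := by
    rcases quadraticChar_dichotomy (F := F) hu1pu with h | h <;>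
      rcases quadraticChar_dichotomy (F := F) hum1' with h' | h'
    · exact absurd (h.trans h'.symm) huu
    · rw [h, h']; ring
    · rw [h, h']; ring
    · exact absurd (h.trans h'.symm) huu
  have h1mu_eq : quadraticChar F (1 - u) =
      quadraticChar F (-1) * quadraticChar F (u - 1) := by
    rw [← map_mul]; congr 1; ring
  have hprod : quadraticChar F (1 - u) * quadraticChar F (1 + u) = 1 := by
    rw [h1mu_eq, hneg1, show (1 : F) + u = u + 1 from add_comm 1 u]
    linear_combination (-1 : ℤ) * key
  have hsq1u : quadraticChar F (1 - u) ^ 2 = 1 := quadraticChar_sq_one h1u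
  have hsq1pu : quadraticChar F (1 + u) ^ 2 = 1 := quadraticChar_sq_one h1pu
  have heq1u : quadraticChar F (1 - u) = quadraticChar F (1 + u) := by
    linear_combination (quadraticChar F (1 + u)) * hprod -
      quadraticChar F (1 - u) * hsq1pu
  -- cube preserves χ
  have hcube : ∀ y : F, quadraticChar F (y ^ 3) = quadraticChar F y := by
    intro y
    rcases eq_or_ne y 0 with h | h
    · rw [h, zero_pow (by norm_num)]
    · rw [pow_succ, map_mul, quadraticChar_sq_one' h, one_mul]
  -- Frobenius is bijective
  have hfr : Function.Bijective (fun x : F => x ^ 3) := by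
    refine Finite.injective_iff_bijective.mp ?_
    intro p q h
    have h9 : (p - q) ^ 3 = 0 := by
      simp only at h
      linear_combination h + (p * q ^ 2 - p ^ 2 * q) * h3
    exact sub_eq_zero.mp ((pow_eq_zero_iff (by norm_num)).mp h9)
  -- the two auxiliary cubic sums
  set T0 : ℤ := ∑ x : F, quadraticChar F (x * (x ^ 2 + (1 - u) * x + u * (1 - u))) with hT0
  set T1 : ℤ := ∑ x : F, quadraticChar F
    (x * (x ^ 2 + (1 - u) ^ 3 * x + u ^ 3 * (1 - u) ^ 3)) with hT1
  -- T1 = T0 via Frobenius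
  have hT : T1 = T0 := by
    rw [hT0, hT1]
    rw [← hfr.sum_comp (fun y => quadraticChar F
      (y * (y ^ 2 + (1 - u) ^ 3 * y + u ^ 3 * (1 - u) ^ 3)))]
    refine (Finset.sum_congr rfl fun x _ => ?_).symm
    have hw : (x ^ 3) * ((x ^ 3) ^ 2 + (1 - u) ^ 3 * (x ^ 3) + u ^ 3 * (1 - u) ^ 3) =
        (x * (x ^ 2 + (1 - u) * x + u * (1 - u))) ^ 3 := by
      linear_combination (-x^7 - x^8 - u*x^5 - 2*u*x^6 + u*x^7 + u*x^8 - u^2*x^4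
        + 2*u^2*x^5 + 4*u^2*x^6 + 3*u^3*x^4 - u^3*x^5 - 2*u^3*x^6 - 3*u^4*x^4
        + u^5*x^4) * h3
    rw [hw, hcube]
  -- Chain B : the second sum equals χ(-(u+1)) * T0 - 1
  have hB : (∑ z : F, quadraticChar F
      ((-(u + 1) * z) * (z * (z - 1 - u)) * (z ^ 2 - z + u ^ 2))) =
      quadraticChar F (-(u + 1)) * T0 - 1 := by
    have hR2 : (∑ z : F, quadraticChar F ((z - 1 - u) * (z ^ 2 - z + u ^ 2))) = T0 := by
      rw [hT0]
      refine (Fintype.sum_bijective (fun x : F => x + (1 + u))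
        (Equiv.addRight ((1 : F) + u)).bijective
        (fun x => quadraticChar F (x * (x ^ 2 + (1 - u) * x + u * (1 - u))))
        (fun z => quadraticChar F ((z - 1 - u) * (z ^ 2 - z + u ^ 2)))
        (fun x => ?_)).symm
      show quadraticChar F (x * (x ^ 2 + (1 - u) * x + u * (1 - u))) =
        quadraticChar F ((x + (1 + u) - 1 - u) * ((x + (1 + u)) ^ 2 - (x + (1 + u)) + u ^ 2))
      congr 1
      linear_combination (-(u * x ^ 2) - u ^ 2 * x) * h3
    have hsqa : quadraticChar F (-(u + 1)) ^ 2 = 1 :=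
      quadraticChar_sq_one (neg_ne_zero.mpr hu1pu)
    have hdiff : ∀ z : F,
        quadraticChar F (-(u + 1)) * quadraticChar F ((z - 1 - u) * (z ^ 2 - z + u ^ 2)) -
        quadraticChar F ((-(u + 1) * z) * (z * (z - 1 - u)) * (z ^ 2 - z + u ^ 2)) =
        if z = 0 then 1 else 0 := by
      intro z
      rcases eq_or_ne z 0 with hz | hz
      · subst hz
        rw [if_pos rfl]
        have e1 : ((0 : F) - 1 - u) * ((0 : F) ^ 2 - 0 + u ^ 2) = -(u + 1) * u ^ 2 := by ring
        have e2 : (-(u + 1) * (0 : F)) * ((0 : F) * ((0 : F) - 1 - u)) *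
            ((0 : F) ^ 2 - 0 + u ^ 2) = 0 := by ring
        rw [e1, e2, quadraticChar_zero, map_mul, quadraticChar_sq_one' hu0]
        linear_combination hsqa
      · rw [if_neg hz]
        have e2 : quadraticChar F ((-(u + 1) * z) * (z * (z - 1 - u)) * (z ^ 2 - z + u ^ 2)) =
            quadraticChar F (-(u + 1)) * quadraticChar F ((z - 1 - u) * (z ^ 2 - z + u ^ 2)) := by
          rw [show (-(u + 1) * z) * (z * (z - 1 - u)) * (z ^ 2 - z + u ^ 2) =
              z ^ 2 * (-(u + 1) * ((z - 1 - u) * (z ^ 2 - z + u ^ 2))) from by ring,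
            map_mul, map_mul, quadraticChar_sq_one' hz, one_mul]
        rw [e2]
        ring
    have hsum : (∑ z : F, (quadraticChar F (-(u + 1)) *
        quadraticChar F ((z - 1 - u) * (z ^ 2 - z + u ^ 2)) -
        quadraticChar F ((-(u + 1) * z) * (z * (z - 1 - u)) * (z ^ 2 - z + u ^ 2)))) = 1 := by
      simp_rw [hdiff]
      simp
    rw [Finset.sum_sub_distrib, ← Finset.mul_sum, hR2] at hsum
    linarith
  -- Chain A : the first sum equals χ(1-u) * T1 - 1
  have hA : (∑ z : F, quadraticChar F ((z * (z - 1 - u)) * (z ^ 2 - z + u ^ 2))) =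
      quadraticChar F (1 - u) * T1 - 1 := by
    set Rsum : ℤ := ∑ z : F, quadraticChar F ((u ^ 2 - (u + 1) * z) * (z ^ 2 - z + u ^ 2))
      with hRsum
    -- step 1 : A = Rsum - 1 via the involution z ↦ u²/z on nonzero z
    have hA1 : (∑ z : F, quadraticChar F ((z * (z - 1 - u)) * (z ^ 2 - z + u ^ 2))) =
        Rsum - 1 := by
      have ha0 : quadraticChar F (((0 : F) * ((0 : F) - 1 - u)) *
          ((0 : F) ^ 2 - 0 + u ^ 2)) = 0 := by
        rw [show ((0 : F) * ((0 : F) - 1 - u)) * ((0 : F) ^ 2 - 0 + u ^ 2) = 0 by ring,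
          quadraticChar_zero]
      have hr0 : quadraticChar F ((u ^ 2 - (u + 1) * (0 : F)) *
          ((0 : F) ^ 2 - 0 + u ^ 2)) = 1 := by
        rw [show (u ^ 2 - (u + 1) * (0 : F)) * ((0 : F) ^ 2 - 0 + u ^ 2) = (u ^ 2) ^ 2 by ring,
          quadraticChar_sq_one' (pow_ne_zero 2 hu0)]
      have hmain : (∑ z ∈ Finset.univ.erase (0 : F),
          quadraticChar F ((u ^ 2 - (u + 1) * z) * (z ^ 2 - z + u ^ 2))) =
          ∑ z ∈ Finset.univ.erase (0 : F),
          quadraticChar F ((z * (z - 1 - u)) * (z ^ 2 - z + u ^ 2)) := by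
        refine Finset.sum_nbij' (fun z => u ^ 2 / z) (fun z => u ^ 2 / z) ?_ ?_ ?_ ?_ ?_
        · intro z hz
          rw [Finset.mem_erase] at hz ⊢
          exact ⟨div_ne_zero (pow_ne_zero 2 hu0) hz.1, Finset.mem_univ _⟩
        · intro z hz
          rw [Finset.mem_erase] at hz ⊢
          exact ⟨div_ne_zero (pow_ne_zero 2 hu0) hz.1, Finset.mem_univ _⟩
        · intro z hz
          rw [Finset.mem_erase] at hz
          field_simp
        · intro z hz
          rw [Finset.mem_erase] at hz
          field_simp
        · intro z hz
          rw [Finset.mem_erase] at hz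
          have hz0 := hz.1
          have keyid : ((u ^ 2 / z) * ((u ^ 2 / z) - 1 - u)) *
              ((u ^ 2 / z) ^ 2 - (u ^ 2 / z) + u ^ 2) =
              (u ^ 2 / z ^ 2) ^ 2 * ((u ^ 2 - (u + 1) * z) * (z ^ 2 - z + u ^ 2)) := by
            field_simp
            ring
          show _ = quadraticChar F (((u ^ 2 / z) * ((u ^ 2 / z) - 1 - u)) *
              ((u ^ 2 / z) ^ 2 - (u ^ 2 / z) + u ^ 2))
          rw [keyid, map_mul (quadraticChar F) ((u ^ 2 / z ^ 2) ^ 2),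
            quadraticChar_sq_one' (div_ne_zero (pow_ne_zero 2 hu0) (pow_ne_zero 2 hz0)),
            one_mul]
      have e1 : quadraticChar F (((0 : F) * ((0 : F) - 1 - u)) * ((0 : F) ^ 2 - 0 + u ^ 2)) +
          (∑ z ∈ Finset.univ.erase (0 : F),
            quadraticChar F ((z * (z - 1 - u)) * (z ^ 2 - z + u ^ 2))) =
          ∑ z : F, quadraticChar F ((z * (z - 1 - u)) * (z ^ 2 - z + u ^ 2)) :=
        Finset.add_sum_erase Finset.univ
          (fun z : F => quadraticChar F ((z * (z - 1 - u)) * (z ^ 2 - z + u ^ 2)))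
          (Finset.mem_univ (0 : F))
      have e2 : quadraticChar F ((u ^ 2 - (u + 1) * (0 : F)) * ((0 : F) ^ 2 - 0 + u ^ 2)) +
          (∑ z ∈ Finset.univ.erase (0 : F),
            quadraticChar F ((u ^ 2 - (u + 1) * z) * (z ^ 2 - z + u ^ 2))) =
          ∑ z : F, quadraticChar F ((u ^ 2 - (u + 1) * z) * (z ^ 2 - z + u ^ 2)) :=
        Finset.add_sum_erase Finset.univ
          (fun z : F => quadraticChar F ((u ^ 2 - (u + 1) * z) * (z ^ 2 - z + u ^ 2)))
          (Finset.mem_univ (0 : F))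
      rw [ha0, zero_add] at e1
      rw [hr0] at e2
      rw [hRsum, ← e1, ← e2, hmain]
      ring
    -- step 2 : Rsum = χ(1-u) * T1 via an affine substitution
    have hA2 : Rsum = quadraticChar F (1 - u) * T1 := by
      have hbij : Function.Bijective
          (fun z : F => u ^ 2 * (1 - u) - ((u + 1) * (1 - u)) * z) := by
        constructor
        · intro p q h
          simp only at h
          have h' : ((u + 1) * (1 - u)) * p = ((u + 1) * (1 - u)) * q := by
            linear_combination -h
          exact mul_left_cancel₀ (mul_ne_zero hu1pu h1u) h'
        · intro y
          refine ⟨(u ^ 2 * (1 - u) - y) / ((u + 1) * (1 - u)), ?_⟩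
          field_simp
          ring
      have hstep : T1 = quadraticChar F (1 - u) * Rsum := by
        rw [hT1, hRsum, Finset.mul_sum]
        rw [← hbij.sum_comp (fun x => quadraticChar F
          (x * (x ^ 2 + (1 - u) ^ 3 * x + u ^ 3 * (1 - u) ^ 3)))]
        refine Finset.sum_congr rfl fun z _ => ?_
        show quadraticChar F ((u ^ 2 * (1 - u) - ((u + 1) * (1 - u)) * z) *
            ((u ^ 2 * (1 - u) - ((u + 1) * (1 - u)) * z) ^ 2 +
              (1 - u) ^ 3 * (u ^ 2 * (1 - u) - ((u + 1) * (1 - u)) * z) +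
              u ^ 3 * (1 - u) ^ 3)) = _
        have hw : (u ^ 2 * (1 - u) - ((u + 1) * (1 - u)) * z) *
            ((u ^ 2 * (1 - u) - ((u + 1) * (1 - u)) * z) ^ 2 +
              (1 - u) ^ 3 * (u ^ 2 * (1 - u) - ((u + 1) * (1 - u)) * z) +
              u ^ 3 * (1 - u) ^ 3) =
            ((u + 1) * (1 - u)) ^ 2 * ((1 - u) *
              ((u ^ 2 - (u + 1) * z) * (z ^ 2 - z + u ^ 2))) := by
          linear_combination (-u*z^2 + 2*u^2*z^2 + 2*u^3*z + u^3*z^2 - 5*u^4*z - 4*u^4*z^2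
            - u^5 + 2*u^5*z + u^5*z^2 + 3*u^6 + 4*u^6*z + 2*u^6*z^2 - 3*u^7 - 4*u^7*z
            - u^7*z^2 + u^8 + u^8*z) * h3
        rw [hw, map_mul (quadraticChar F) (((u + 1) * (1 - u)) ^ 2),
          quadraticChar_sq_one' (mul_ne_zero hu1pu h1u), one_mul, map_mul]
      linear_combination (-(quadraticChar F (1 - u))) * hstep - Rsum * hsq1u
    rw [hA1, hA2]
  -- put everything together
  rw [hA, hB, hT]
  have hsign : quadraticChar F (-(u + 1)) = -quadraticChar F (1 - u) := by
    rw [show (-(u + 1) : F) = -1 * (1 + u) by ring, map_mul, hneg1, heq1u]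
    ring
  rw [hsign]
  ring
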